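/- Let x, y, z be real numbers with x² + y² + (z - 1/4)² = 1/16, and set h₂ = e₁e₂ + 2x(e₁e₊ - e₂e₃) + 2y(e₂e₊ + e₁e₃) + 2z(e₃e₊ - e₁e₂) in CGA. Then h₂² + 1 = 0. -/

import Mathlib

open CliffordAlgebra Polynomial

noncomputable section

/-- The quadratic form of signature (4,1) on ℝ⁵. -/
def Qf : QuadraticForm ℝ (Fin 5 → ℝ) := QuadraticMap.weightedSumSquares ℝ ![1,1,1,1,-1]

/-- Conformal geometric algebra of ℝ^{4,1}. -/
abbrev CGA := CliffordAlgebra Qf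

/-- The orthonormal generators e₁, e₂, e₃, e₊, e₋ (indices 0,1,2,3,4). -/
def e (a : Fin 5) : CGA := ι Qf (Pi.single a 1)

lemma Qf_single (a : Fin 5) : Qf (Pi.single a 1) = ![1,1,1,1,-1] a := by
  fin_cases a <;> simp [Qf, QuadraticMap.weightedSumSquares_apply, Pi.single_apply]

lemma e_anti {a b : Fin 5} (h : a ≠ b) : e b * e a = - (e a * e b) := by
  have h2 := CliffordAlgebra.ι_mul_ι_add_swap (Q := Qf) (Pi.single a 1) (Pi.single b 1)
  have key : ∀ i, (Pi.single a (1:ℝ) : Fin 5 → ℝ) i * (Pi.single b (1:ℝ) : Fin 5 → ℝ) i = 0 := by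
    intro i
    rcases eq_or_ne i a with rfl | hi
    · simp [Pi.single_apply, h.symm]
    · simp [Pi.single_apply, hi]
  have hp : QuadraticMap.polar Qf (Pi.single a 1) (Pi.single b 1) = 0 := by
    simp only [QuadraticMap.polar, Qf, QuadraticMap.weightedSumSquares_apply, Pi.add_apply,
      smul_eq_mul, zsmul_eq_mul]
    rw [← Finset.sum_sub_distrib, ← Finset.sum_sub_distrib]
    apply Finset.sum_eq_zero
    intro i _
    linear_combination (2 * ((![1,1,1,1,-1] : Fin 5 → ℤ) i : ℝ)) * key i
  rw [hp, map_zero] at h2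
  have h3 : e a * e b + e b * e a = 0 := h2
  exact eq_neg_of_add_eq_zero_right h3

lemma e_sq_one {a : Fin 5} (h : (![1,1,1,1,-1] : Fin 5 → ℝ) a = 1) : e a * e a = 1 := by
  rw [e, ι_sq_scalar, Qf_single, h, map_one]

lemma e_sq_one' {a : Fin 5} (h : (![1,1,1,1,-1] : Fin 5 → ℝ) a = 1) (x : CGA) :
    e a * (e a * x) = x := by
  rw [← mul_assoc, e_sq_one h, one_mul]

lemma e_anti' {a b : Fin 5} (h : a ≠ b) (x : CGA) :
    e b * (e a * x) = -(e a * (e b * x)) := by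
  rw [← mul_assoc, e_anti h, neg_mul, mul_assoc]

/-- if x² + y² + (z - 1/4)² = 1/16 then
h₂ = e₁e₂ + 2x(e₁e₊-e₂e₃) + 2y(e₂e₊+e₁e₃) + 2z(e₃e₊-e₁e₂) satisfies h₂² + 1 = 0. -/
theorem h2_squares_to_minus_one (x y z : ℝ)
    (hs : x^2 + y^2 + (z - 1/4)^2 = 1/16) :
    (e 0 * e 1 + (2*x) • (e 0 * e 3 - e 1 * e 2) + (2*y) • (e 1 * e 3 + e 0 * e 2)
      + (2*z) • (e 2 * e 3 - e 0 * e 1))^2 + 1 = 0 := by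
  have s0' := e_sq_one' (a := 0) (by norm_num)
  have s1' := e_sq_one' (a := 1) (by norm_num)
  have s2' := e_sq_one' (a := 2) (by rfl)
  have s3' := e_sq_one' (a := 3) (by rfl)
  have s0 := e_sq_one (a := 0) (by norm_num)
  have s1 := e_sq_one (a := 1) (by norm_num)
  have s2 := e_sq_one (a := 2) (by rfl)
  have s3 := e_sq_one (a := 3) (by rfl)
  have a10 : e 1 * e 0 = -(e 0 * e 1) := e_anti (by decide)
  have a20 : e 2 * e 0 = -(e 0 * e 2) := e_anti (by decide)
  have a21 : e 2 * e 1 = -(e 1 * e 2) := e_anti (by decide)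
  have a30 : e 3 * e 0 = -(e 0 * e 3) := e_anti (by decide)
  have a31 : e 3 * e 1 = -(e 1 * e 3) := e_anti (by decide)
  have a32 : e 3 * e 2 = -(e 2 * e 3) := e_anti (by decide)
  have a10' := e_anti' (a := 0) (b := 1) (by decide)
  have a20' := e_anti' (a := 0) (b := 2) (by decide)
  have a21' := e_anti' (a := 1) (b := 2) (by decide)
  have a30' := e_anti' (a := 0) (b := 3) (by decide)
  have a31' := e_anti' (a := 1) (b := 3) (by decide)
  have a32' := e_anti' (a := 2) (b := 3) (by decide)
  simp only [pow_two]
  simp only [mul_add, add_mul, sub_mul, mul_sub, smul_mul_assoc, mul_smul_comm, smul_smul,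
    smul_sub, smul_add, mul_assoc, mul_neg, neg_mul, neg_neg, smul_neg, neg_smul,
    s0', s1', s2', s3', a10', a20', a21', a30', a31', a32', a10, a20, a21, a30, a31, a32,
    s0, s1, s2, s3, mul_one]
  match_scalars
  all_goals try ring
  all_goals linear_combination (-8:ℝ) * hs
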